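/- Let G be a group acting continuously by isometries on a metric space X, and suppose G is a P-group in the sense that every countable (more generally, every < 𝔪-sized) intersection of open subsets of G is open. Let f : X → ℝ be a Katětov function controlled by a countable set A ⊆ X, i.e., f(x) = inf_{a∈A}(f(a)+d(x,a)). Then for every ε > 0, the set V = { g ∈ G : ∀ a ∈ A, d(a, g·a) < ε } is a neighbourhood of the identity, and for every g ∈ V and every x ∈ X, |f(g⁻¹·x) − f(x)| < 3ε. -/

import Mathlib

section Aux

variable {G X : Type*} [Group G] [MetricSpace X] [MulAction G X]

private lemma katetov_key
    (hiso : ∀ g : G, Isometry fun y : X => g • y)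
    (A : Set X)
    (f : X → ℝ) (hfl : LipschitzWith 1 f)
    (hctrl : ∀ x : X, f x = ⨅ a : A, (f a + dist x (a : X)))
    {ε : ℝ} (hε : 0 < ε) {g : G} (hg : ∀ a ∈ A, dist a (g • a) < ε) (x : X) :
    f (g⁻¹ • x) ≤ f x + ε := by
  have hlip : ∀ y z : X, f y ≤ f z + dist y z := by
    intro y z
    have := hfl.dist_le_mul y z
    rw [Real.dist_eq, NNReal.coe_one, one_mul] at this
    linarith [abs_le.mp this |>.2, le_abs_self (f y - f z)]
  rcases isEmpty_or_nonempty A with hA | hA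
  · rw [hctrl (g⁻¹ • x), hctrl x]
    simp [Real.iInf_of_isEmpty]
    linarith
  · rw [hctrl (g⁻¹ • x), hctrl x]
    have hbdd : BddBelow (Set.range fun a : A => f a + dist x (a : X)) := by
      refine ⟨f x - 0, ?_⟩
      rintro _ ⟨a, rfl⟩
      have := hlip x a
      simp only [sub_zero]
      linarith [dist_comm x (a : X) ▸ this]
    rw [ciInf_add hbdd]
    apply ciInf_mono
    · refine ⟨f (g⁻¹ • x), ?_⟩
      rintro _ ⟨a, rfl⟩
      have := hlip (g⁻¹ • x) a
      linarith
    · intro a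
      have h1 : dist (g⁻¹ • x) (a : X) = dist x (g • (a : X)) := by
        have := (hiso g).dist_eq (g⁻¹ • x) (a : X)
        simpa using this.symm
      have h2 : dist x (g • (a : X)) ≤ dist x (a : X) + dist (a : X) (g • (a : X)) :=
        dist_triangle _ _ _
      have h3 := hg a a.2
      rw [h1]
      linarith

end Aux

theorem pgroup_action_on_controlled_katetov
    {G X : Type*} [Group G] [TopologicalSpace G] [IsTopologicalGroup G]
    [MetricSpace X] [MulAction G X] [ContinuousSMul G X]
    (hiso : ∀ g : G, Isometry fun y : X => g • y)
    (hP : ∀ S : Set (Set G), S.Countable → (∀ s ∈ S, IsOpen s) → IsOpen (⋂₀ S))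
    (A : Set X) (hA : A.Countable)
    (f : X → ℝ) (hfl : LipschitzWith 1 f)
    (hfk : ∀ x y : X, dist x y ≤ f x + f y)
    (hctrl : ∀ x : X, f x = ⨅ a : A, (f a + dist x (a : X))) :
    ∀ ε > (0 : ℝ),
      {g : G | ∀ a ∈ A, dist a (g • a) < ε} ∈ nhds (1 : G) ∧
      ∀ g ∈ {g : G | ∀ a ∈ A, dist a (g • a) < ε}, ∀ x : X,
        |f (g⁻¹ • x) - f x| < 3 * ε := by
  intro ε hε
  constructor
  · have heq : {g : G | ∀ a ∈ A, dist a (g • a) < ε}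
        = ⋂₀ ((fun a : X => {g : G | dist a (g • a) < ε}) '' A) := by
      ext g
      simp [Set.mem_sInter]
    have hopen : IsOpen {g : G | ∀ a ∈ A, dist a (g • a) < ε} := by
      rw [heq]
      apply hP _ (hA.image _)
      rintro _ ⟨a, _, rfl⟩
      have hc : Continuous fun g : G => dist a (g • a) :=
        continuous_const.dist (continuous_id.smul continuous_const)
      exact isOpen_Iio.preimage hc
    exact hopen.mem_nhds (by simp [hε])
  · intro g hg x
    have hg' : ∀ a ∈ A, dist a (g⁻¹ • a) < ε := by
      intro a ha
      have := (hiso g).dist_eq (g⁻¹ • a) a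
      simp only [smul_inv_smul] at this
      rw [dist_comm, ← this]
      exact hg a ha
    have h1 : f (g⁻¹ • x) ≤ f x + ε := katetov_key hiso A f hfl hctrl hε hg x
    have h2 : f x ≤ f (g⁻¹ • x) + ε := by
      have := katetov_key hiso A f hfl hctrl hε hg' (g⁻¹ • x)
      simpa using this
    rw [abs_sub_lt_iff]
    constructor <;> linarith
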